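/- Let V be a finite-dimensional real inner product space, R ⊂ V an irreducible reduced root system spanning V, with Weyl group W ⊂ O(V), and let a ∈ V be a nonzero dominant minuscule coweight, i.e. a is dominant with respect to a base of R and (α, a) ∈ {0, 1, −1} for every α ∈ R. Then the subspace of vectors of V fixed by the stabilizer W_a of a in W is exactly the line ℝ·a. -/

import Mathlib

open scoped RealInnerProductSpace

variable {V : Type*} [NormedAddCommGroup V] [InnerProductSpace ℝ V] [FiniteDimensional ℝ V]

/-- The orthogonal reflection in the hyperplane orthogonal to `α`. -/
noncomputable def rootReflection (α : V) : V → V :=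
  fun v => v - (2 * ⟪v, α⟫ / ⟪α, α⟫) • α

/-- `R` is a reduced root system in `V`. -/
def IsReducedRootSystem (R : Set V) : Prop :=
  R.Finite ∧ (0 : V) ∉ R ∧
    (∀ α ∈ R, ∀ t : ℝ, t • α ∈ R → t = 1 ∨ t = -1) ∧
    (∀ α ∈ R, ∀ β ∈ R, rootReflection α β ∈ R) ∧
    (∀ α ∈ R, ∀ β ∈ R, ∃ m : ℤ, 2 * ⟪β, α⟫ / ⟪α, α⟫ = (m : ℝ))

/-- The Weyl group of `R`: the subgroup of the orthogonal group of `V` generated by the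
reflections in the roots of `R`. -/
noncomputable def weylGroup (R : Set V) : Subgroup (V ≃ₗᵢ[ℝ] V) :=
  Subgroup.closure {w | ∃ α ∈ R, ∀ v : V, w v = rootReflection α v}

/-- Two vectors lie in the same irreducible component of `R`: the equivalence relation
generated by non-orthogonality of roots. -/
def SameComponent (R : Set V) : V → V → Prop :=
  Relation.EqvGen fun x y => x ∈ R ∧ y ∈ R ∧ ⟪x, y⟫ ≠ 0

/-- `a` is minuscule: for every irreducible component `Rᵢ` of `R`, the set of inner
products `{(α, a) : α ∈ Rᵢ}` has at most `3` elements. -/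
def IsMinuscule (R : Set V) (a : V) : Prop :=
  ∀ α ∈ R, ({t : ℝ | ∃ β ∈ R, SameComponent R α β ∧ ⟪β, a⟫ = t}).ncard ≤ 3

/-- `Δ` is a base of the root system `R`: a linearly independent subset of `R` such that
every root is a linear combination of elements of `Δ` with integer coefficients, all of
the same sign. -/
def IsBase (R Δ : Set V) : Prop :=
  Δ ⊆ R ∧ LinearIndependent ℝ ((↑) : Δ → V) ∧
    ∀ α ∈ R, ∃ c : V →₀ ℤ, (c.support : Set V) ⊆ Δ ∧
      ((∀ β, 0 ≤ c β) ∨ (∀ β, c β ≤ 0)) ∧ α = c.sum fun β m => (m : ℝ) • β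

/-- The Mathlib orthogonal reflection in the hyperplane orthogonal to `α` agrees with
`rootReflection α`. -/
lemma reflection_eq_rootReflection (α u : V) :
    (Submodule.reflection (ℝ ∙ α)ᗮ) u = rootReflection α u := by
  rw [Submodule.reflection_apply, Submodule.starProjection_orthogonal_val, Submodule.starProjection_singleton]
  simp only [rootReflection, RCLike.ofReal_real_eq_id, id_eq]
  rw [real_inner_comm u α, real_inner_self_eq_norm_sq]
  match_scalars <;> ring

lemma neg_mem_of_mem {R : Set V} (hR : IsReducedRootSystem R) {x : V} (hx : x ∈ R) :
    -x ∈ R := by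
  obtain ⟨-, h0, -, hrefl, -⟩ := hR
  have hx0 : x ≠ 0 := fun h => h0 (h ▸ hx)
  have hxx : ⟪x, x⟫ ≠ 0 := fun h => hx0 (inner_self_eq_zero.mp h)
  have key : rootReflection x x = -x := by
    simp only [rootReflection]
    rw [mul_div_assoc, div_self hxx, mul_one]
    module
  have := hrefl x hx x hx
  rwa [key] at this

/-- If two roots have negative inner product and are not opposite, their sum is a root. -/
lemma sum_mem_of_inner_neg {R : Set V} (hR : IsReducedRootSystem R) {x y : V}
    (hx : x ∈ R) (hy : y ∈ R) (hxy : ⟪x, y⟫ < 0) (hne : x + y ≠ 0) : x + y ∈ R := by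
  obtain ⟨-, h0, hred, hrefl, hint⟩ := hR
  have hx0 : x ≠ 0 := fun h => h0 (h ▸ hx)
  have hy0 : y ≠ 0 := fun h => h0 (h ▸ hy)
  have hsx : (0:ℝ) < ⟪x, x⟫ :=
    lt_of_le_of_ne real_inner_self_nonneg (Ne.symm (inner_self_ne_zero.mpr hx0))
  have hsy : (0:ℝ) < ⟪y, y⟫ :=
    lt_of_le_of_ne real_inner_self_nonneg (Ne.symm (inner_self_ne_zero.mpr hy0))
  obtain ⟨m1, hm1⟩ := hint x hx y hy
  obtain ⟨m2, hm2⟩ := hint y hy x hx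
  by_cases h1 : (m1 : ℝ) = -1
  · have key : rootReflection x y = x + y := by
      simp only [rootReflection]
      rw [hm1, h1]
      module
    have := hrefl x hx y hy
    rwa [key] at this
  by_cases h2 : (m2 : ℝ) = -1
  · have key : rootReflection y x = x + y := by
      simp only [rootReflection]
      rw [hm2, h2]
      module
    have := hrefl y hy x hx
    rwa [key] at this
  exfalso
  have e1 : 2 * ⟪x, y⟫ = (m1 : ℝ) * ⟪x, x⟫ := by
    rw [div_eq_iff (ne_of_gt hsx)] at hm1
    rw [real_inner_comm y x]
    linarith
  have e2 : 2 * ⟪x, y⟫ = (m2 : ℝ) * ⟪y, y⟫ := by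
    rw [div_eq_iff (ne_of_gt hsy)] at hm2
    linarith
  have hm1neg : (m1 : ℝ) < 0 := by
    by_contra h
    push_neg at h
    nlinarith
  have hm2neg : (m2 : ℝ) < 0 := by
    by_contra h
    push_neg at h
    nlinarith
  have hm1le : (m1 : ℝ) ≤ -2 := by
    have : m1 ≤ -2 := by
      have h1' : m1 < 0 := by exact_mod_cast hm1neg
      have h1'' : m1 ≠ -1 := fun h => h1 (by exact_mod_cast congrArg (Int.cast : ℤ → ℝ) h)
      omega
    exact_mod_cast this
  have hm2le : (m2 : ℝ) ≤ -2 := by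
    have : m2 ≤ -2 := by
      have h2' : m2 < 0 := by exact_mod_cast hm2neg
      have h2'' : m2 ≠ -1 := fun h => h2 (by exact_mod_cast congrArg (Int.cast : ℤ → ℝ) h)
      omega
    exact_mod_cast this
  have key : ⟪x, x⟫ * ⟪y, y⟫ ≤ ⟪x, y⟫ ^ 2 := by
    nlinarith [mul_le_mul_of_nonpos_left hm2le (by linarith : (m1:ℝ) ≤ 0)]
  set c : ℝ := ⟪x, y⟫ / ⟪x, x⟫ with hc
  have expand : ⟪y - c • x, y - c • x⟫ = (⟪x, x⟫ * ⟪y, y⟫ - ⟪x, y⟫ ^ 2) / ⟪x, x⟫ := by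
    simp only [inner_sub_left, inner_sub_right, real_inner_smul_left, real_inner_smul_right,
      real_inner_comm x y, hc]
    field_simp
    ring
  have hd : ⟪y - c • x, y - c • x⟫ ≤ 0 := by
    rw [expand]
    apply div_nonpos_of_nonpos_of_nonneg (by linarith) (le_of_lt hsx)
  have hyx : y = c • x := by
    have := real_inner_self_nonpos.mp hd
    have := sub_eq_zero.mp this
    exact this
  have hcneg : c < 0 := div_neg_of_neg_of_pos hxy hsx
  rcases hred x hx c (hyx ▸ hy) with h | h
  · rw [h] at hcneg; norm_num at hcneg
  · rw [h] at hyx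
    apply hne
    rw [hyx]
    module

theorem fixed_space_of_stabilizer_of_minuscule_coweight
    (R : Set V) (hR : IsReducedRootSystem R)
    (hspan : Submodule.span ℝ R = ⊤)
    (hirr : ∀ α ∈ R, ∀ β ∈ R, SameComponent R α β)
    (a : V) (ha0 : a ≠ 0)
    (Δ : Set V) (hΔ : IsBase R Δ)
    (hdom : ∀ α ∈ Δ, 0 ≤ ⟪α, a⟫)
    (hmin : ∀ α ∈ R, ⟪α, a⟫ = 0 ∨ ⟪α, a⟫ = 1 ∨ ⟪α, a⟫ = -1)
    (v : V) :
    (∀ w ∈ weylGroup R, w a = a → w v = v) ↔ ∃ t : ℝ, v = t • a := by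
  constructor
  case mpr =>
    rintro ⟨t, rfl⟩ w _ hwa
    rw [map_smul, hwa]
  intro hv
  obtain ⟨hfin, h0R, hred, hreflR, hint⟩ := hR
  have hne0 : ∀ x ∈ R, x ≠ 0 := fun x hx h => h0R (h ▸ hx)
  have hxx : ∀ x ∈ R, ⟪x, x⟫ ≠ 0 := fun x hx h => hne0 x hx (inner_self_eq_zero.mp h)
  -- unit inner products with `a`
  have hunit : ∀ x ∈ R, ⟪x, a⟫ ≠ 0 → ⟪x, a⟫ * ⟪x, a⟫ = 1 := by
    intro x hx hxa
    rcases hmin x hx with h | h | h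
    · exact absurd h hxa
    · rw [h]; norm_num
    · rw [h]; norm_num
  -- reflections in roots orthogonal to `a` fix `a`, hence fix `v`
  set M : Submodule ℝ V := Submodule.span ℝ {x | x ∈ R ∧ ⟪x, a⟫ = 0} with hM
  have hv0 : ∀ α ∈ R, ⟪α, a⟫ = 0 → ⟪v, α⟫ = 0 := by
    intro α hα hαa
    have hmem : Submodule.reflection (ℝ ∙ α)ᗮ ∈ weylGroup R :=
      Subgroup.subset_closure ⟨α, hα, reflection_eq_rootReflection α⟩
    have hfix : (Submodule.reflection (ℝ ∙ α)ᗮ) a = a := by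
      rw [reflection_eq_rootReflection]
      simp only [rootReflection]
      rw [real_inner_comm α a, hαa]
      simp
    have hvfix := hv _ hmem hfix
    rw [reflection_eq_rootReflection] at hvfix
    simp only [rootReflection] at hvfix
    have : (2 * ⟪v, α⟫ / ⟪α, α⟫) • α = 0 := by
      have := sub_eq_self.mp hvfix
      exact this
    rcases smul_eq_zero.mp this with h | h
    · rcases div_eq_zero_iff.mp h with h' | h'
      · linarith
      · exact absurd h' (hxx α hα)
    · exact absurd h (hne0 α hα)
  have hMv : ∀ m ∈ M, ⟪v, m⟫ = 0 := by
    intro m hm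
    have : M ≤ LinearMap.ker (innerSL ℝ v : V →ₗ[ℝ] ℝ) := by
      rw [hM]
      apply Submodule.span_le.mpr
      rintro x ⟨hxR, hxa⟩
      simp only [SetLike.mem_coe, LinearMap.mem_ker, ContinuousLinearMap.coe_coe, innerSL_apply_apply]
      exact hv0 x hxR hxa
    exact this hm
  have hMa : ∀ m ∈ M, ⟪a, m⟫ = 0 := by
    intro m hm
    have : M ≤ LinearMap.ker (innerSL ℝ a : V →ₗ[ℝ] ℝ) := by
      rw [hM]
      apply Submodule.span_le.mpr
      rintro x ⟨hxR, hxa⟩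
      simp only [SetLike.mem_coe, LinearMap.mem_ker, ContinuousLinearMap.coe_coe, innerSL_apply_apply]
      rw [real_inner_comm]
      exact hxa
    exact this hm
  -- a root not orthogonal to `a`
  have hexists : ∃ β₀ ∈ R, ⟪β₀, a⟫ ≠ 0 := by
    by_contra h
    push_neg at h
    have : (Submodule.span ℝ R : Submodule ℝ V) ≤ LinearMap.ker (innerSL ℝ a : V →ₗ[ℝ] ℝ) := by
      apply Submodule.span_le.mpr
      intro x hx
      simp only [SetLike.mem_coe, LinearMap.mem_ker, ContinuousLinearMap.coe_coe, innerSL_apply_apply]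
      rw [real_inner_comm]
      exact h x hx
    have ha : ⟪a, a⟫ = 0 := by
      have : a ∈ LinearMap.ker (innerSL ℝ a : V →ₗ[ℝ] ℝ) := this (hspan ▸ Submodule.mem_top)
      simpa using this
    exact ha0 (inner_self_eq_zero.mp ha)
  obtain ⟨β₀, hβ₀R, hβ₀a⟩ := hexists
  have hRfull : IsReducedRootSystem R := ⟨hfin, h0R, hred, hreflR, hint⟩
  -- key lemma: two non-orthogonal roots not orthogonal to `a` have the same class mod `M`
  have hA : ∀ x ∈ R, ∀ y ∈ R, ⟪x, a⟫ ≠ 0 → ⟪y, a⟫ ≠ 0 → ⟪x, y⟫ ≠ 0 →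
      ⟪x, a⟫ • x - ⟪y, a⟫ • y ∈ M := by
    intro x hx y hy hxa hya hxy
    have hex := hunit x hx hxa
    have hey := hunit y hy hya
    set x' : V := ⟪x, a⟫ • x with hx'
    set y' : V := ⟪y, a⟫ • y with hy'
    have hx'R : x' ∈ R := by
      rcases hmin x hx with h | h | h
      · exact absurd h hxa
      · rw [hx', h, one_smul]; exact hx
      · rw [hx', h]; simpa using neg_mem_of_mem hRfull hx
    have hy'R : y' ∈ R := by
      rcases hmin y hy with h | h | h
      · exact absurd h hya
      · rw [hy', h, one_smul]; exact hy
      · rw [hy', h]; simpa using neg_mem_of_mem hRfull hy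
    have hx'a : ⟪x', a⟫ = 1 := by rw [hx', real_inner_smul_left]; exact hex
    have hy'a : ⟪y', a⟫ = 1 := by rw [hy', real_inner_smul_left]; exact hey
    have hx'y' : ⟪x', y'⟫ ≠ 0 := by
      rw [hx', hy', real_inner_smul_left, real_inner_smul_right]
      intro h
      rcases mul_eq_zero.mp h with h' | h'
      · exact hxa h'
      rcases mul_eq_zero.mp h' with h'' | h''
      · exact hya h''
      · exact hxy h''
    by_cases heq : x' = y'
    · rw [heq, sub_self]; exact M.zero_mem
    rcases lt_or_gt_of_ne hx'y' with hneg | hpos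
    · exfalso
      have hsum0 : x' + y' ≠ 0 := by
        intro h
        have : y' = -x' := by linear_combination (norm := module) h
        rw [this, inner_neg_left, hx'a] at hy'a
        norm_num at hy'a
      have hsR := sum_mem_of_inner_neg hRfull hx'R hy'R hneg hsum0
      rcases hmin _ hsR with h | h | h <;>
        · rw [inner_add_left, hx'a, hy'a] at h; norm_num at h
    · -- x' - y' is a root orthogonal to a
      have hy'' : -y' ∈ R := neg_mem_of_mem hRfull hy'R
      have hinner : ⟪x', -y'⟫ < 0 := by rw [inner_neg_right]; linarith
      have hsum0 : x' + -y' ≠ 0 := by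
        intro h
        exact heq (by linear_combination (norm := module) h)
      have hsR := sum_mem_of_inner_neg hRfull hx'R hy'' hinner hsum0
      have horth : ⟪x' + -y', a⟫ = 0 := by
        rw [inner_add_left, inner_neg_left, hx'a, hy'a]; ring
      have : x' + -y' ∈ M := Submodule.subset_span ⟨hsR, horth⟩
      simpa [sub_eq_add_neg] using this
  -- "Good" roots: roots adjacent to (or equal to) a root in the class of β₀
  set e₀ : ℝ := ⟪β₀, a⟫ with he₀
  set Good : V → Prop := fun y => ∃ x, x ∈ R ∧ ⟪x, a⟫ ≠ 0 ∧
      ⟪x, a⟫ • x - e₀ • β₀ ∈ M ∧ (x = y ∨ ⟪x, y⟫ ≠ 0) with hGood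
  have step : ∀ y z : V, (y ∈ R ∧ z ∈ R ∧ ⟪y, z⟫ ≠ 0) → Good y → Good z := by
    rintro y z ⟨hyR, hzR, hyz⟩ ⟨x, hxR, hxa, hxc, hxy⟩
    rcases hxy with rfl | hxy
    · exact ⟨x, hxR, hxa, hxc, Or.inr hyz⟩
    by_cases hya : ⟪y, a⟫ = 0
    · -- reflect y in x to get a root in the class of β₀ near z
      set n : ℝ := 2 * ⟪y, x⟫ / ⟪x, x⟫ with hn
      have hnne : n ≠ 0 := by
        rw [hn]
        intro h
        rcases div_eq_zero_iff.mp h with h' | h'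
        · have : ⟪y, x⟫ = 0 := by linarith
          rw [real_inner_comm] at this
          exact hxy this
        · exact hxx x hxR h'
      have huR : rootReflection x y ∈ R := hreflR x hxR y hyR
      set u : V := rootReflection x y with hu
      have huy : u = y - n • x := by rw [hu, hn]; rfl
      have hua : ⟪u, a⟫ = -(n * ⟪x, a⟫) := by
        rw [huy, inner_sub_left, real_inner_smul_left, hya]
        ring
      have huane : ⟪u, a⟫ ≠ 0 := by
        rw [hua]
        intro h
        rcases mul_eq_zero.mp (neg_eq_zero.mp h) with h' | h'
        · exact hnne h'
        · exact hxa h'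
      have hn2 : n * n = 1 := by
        have h1 := hunit _ huR huane
        have h2 := hunit x hxR hxa
        rw [hua] at h1
        nlinarith
      have humem : ⟪u, a⟫ • u - e₀ • β₀ ∈ M := by
        have hyM : y ∈ M := Submodule.subset_span ⟨hyR, hya⟩
        have hexp : ⟪u, a⟫ • u - e₀ • β₀ =
            (-(n * ⟪x, a⟫)) • y + (⟪x, a⟫ • x - e₀ • β₀) := by
          rw [hua, huy]
          match_scalars
          · ring
          · linear_combination (⟪x, a⟫ : ℝ) * hn2
          · ring
        rw [hexp]
        exact M.add_mem (M.smul_mem _ hyM) hxc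
      by_cases hxz : ⟪x, z⟫ = 0
      · refine ⟨u, huR, huane, humem, Or.inr ?_⟩
        rw [huy, inner_sub_left, real_inner_smul_left, hxz, mul_zero, sub_zero]
        exact hyz
      · exact ⟨x, hxR, hxa, hxc, Or.inr hxz⟩
    · -- y itself is in the class of β₀
      have h1 := hA x hxR y hyR hxa hya hxy
      have hyc : ⟪y, a⟫ • y - e₀ • β₀ ∈ M := by
        have heq : ⟪y, a⟫ • y - e₀ • β₀ =
            (⟪x, a⟫ • x - e₀ • β₀) - (⟪x, a⟫ • x - ⟪y, a⟫ • y) := by abel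
        rw [heq]
        exact M.sub_mem hxc h1
      exact ⟨y, hyR, hya, hyc, Or.inr hyz⟩
  have key2 : ∀ p q : V, SameComponent R p q → (Good p ↔ Good q) := by
    intro p q h
    induction h with
    | rel x y hxy =>
      exact ⟨step x y hxy, step y x ⟨hxy.2.1, hxy.1, by rw [real_inner_comm]; exact hxy.2.2⟩⟩
    | refl x => exact Iff.rfl
    | symm x y _ ih => exact ih.symm
    | trans x y z _ _ ih1 ih2 => exact ih1.trans ih2
  have goodβ₀ : Good β₀ := ⟨β₀, hβ₀R, hβ₀a, by rw [← he₀, sub_self]; exact M.zero_mem, Or.inl rfl⟩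
  have hclass : ∀ γ ∈ R, ⟪γ, a⟫ ≠ 0 → ⟪γ, a⟫ • γ - e₀ • β₀ ∈ M := by
    intro γ hγ hγa
    obtain ⟨x, hxR, hxa, hxc, hxy⟩ := (key2 β₀ γ (hirr β₀ hβ₀R γ hγ)).mp goodβ₀
    rcases hxy with rfl | hxγ
    · exact hxc
    · have h1 := hA x hxR γ hγ hxa hγa hxγ
      have heq : ⟪γ, a⟫ • γ - e₀ • β₀ =
          (⟪x, a⟫ • x - e₀ • β₀) - (⟪x, a⟫ • x - ⟪γ, a⟫ • γ) := by abel
      rw [heq]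
      exact M.sub_mem hxc h1
  -- V = M ⊔ ℝ β₀
  have hspan2 : (⊤ : Submodule ℝ V) ≤ M ⊔ (ℝ ∙ β₀) := by
    rw [← hspan]
    apply Submodule.span_le.mpr
    intro γ hγ
    by_cases hγa : ⟪γ, a⟫ = 0
    · exact Submodule.mem_sup_left (Submodule.subset_span ⟨hγ, hγa⟩)
    · have hc := hclass γ hγ hγa
      have he := hunit γ hγ hγa
      have hdecomp : γ = ⟪γ, a⟫ • (⟪γ, a⟫ • γ - e₀ • β₀) + (⟪γ, a⟫ * e₀) • β₀ := by
        match_scalars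
        · linear_combination -he
        · ring
      rw [hdecomp]
      exact Submodule.add_mem _ (Submodule.mem_sup_left (M.smul_mem _ hc))
        (Submodule.mem_sup_right (Submodule.smul_mem _ _ (Submodule.mem_span_singleton_self β₀)))
  -- final computation
  obtain ⟨m, hm, z, hz, hmz⟩ := Submodule.mem_sup.mp (hspan2 (Submodule.mem_top (x := v)))
  obtain ⟨s, rfl⟩ := Submodule.mem_span_singleton.mp hz
  obtain ⟨m', hm', z', hz', hmz'⟩ := Submodule.mem_sup.mp (hspan2 (Submodule.mem_top (x := a)))
  obtain ⟨t, rfl⟩ := Submodule.mem_span_singleton.mp hz'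
  have ht : ⟪a, a⟫ = t * e₀ := by
    have h' : ⟪a, m' + t • β₀⟫ = ⟪a, a⟫ := by rw [hmz']
    rw [← h', inner_add_right, hMa m' hm', real_inner_smul_right, real_inner_comm β₀ a, ← he₀]
    ring
  have htne : t ≠ 0 := by
    intro h
    rw [h, zero_mul] at ht
    exact ha0 (inner_self_eq_zero.mp ht)
  refine ⟨s / t, ?_⟩
  have hxM : v - (s / t) • a ∈ M := by
    rw [← hmz, ← hmz']
    have heq : m + s • β₀ - (s / t) • (m' + t • β₀) =
        (m - (s / t) • m') + (s - s / t * t) • β₀ := by module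
    rw [heq, div_mul_cancel₀ s htne, sub_self, zero_smul, add_zero]
    exact M.sub_mem hm (M.smul_mem _ hm')
  have hperp : ⟪v - (s / t) • a, v - (s / t) • a⟫ = 0 := by
    have h1 : ∀ m'' ∈ M, ⟪v - (s / t) • a, m''⟫ = 0 := by
      intro m'' hm''
      rw [inner_sub_left, real_inner_smul_left, hMv m'' hm'', hMa m'' hm'']
      ring
    exact h1 _ hxM
  have := inner_self_eq_zero.mp hperp
  linear_combination (norm := module) this
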